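/- arXiv:2204.08300 — 7 statements merged into one kernel-verified Lean document; each statement's English description precedes it below -/
import Mathlib

section
/- The pairwise dominance extension of a strict linear order is antisymmetric on finite sets: if S ≿^PD T and T ≿^PD S for finite sets S, T of objects, then S = T. -/
open Finset

noncomputable section

abbrev Obj := ℕ

def PD (r : Obj → Obj → Prop) (S T : Finset Obj) : Prop :=
  ∃ μ : {x // x ∈ T} → {x // x ∈ S}, Function.Injective μ ∧ ∀ x, r (μ x).1 x.1

def StrictPD (r : Obj → Obj → Prop) (S T : Finset Obj) : Prop :=
  PD r S T ∧ ¬ PD r T S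

def LinProfile {n : ℕ} (pref : Fin n → Obj → Obj → Prop) : Prop :=
  ∀ i, IsLinearOrder Obj (pref i)

def IsAlloc {n : ℕ} (A : Fin n → Finset Obj) (X : Finset Obj) : Prop :=
  (∀ i, A i ⊆ X) ∧ ∀ i j, i ≠ j → Disjoint (A i) (A j)

open Classical in
def topOf (r : Obj → Obj → Prop) (X : Finset Obj) : Obj :=
  if h : ∃ m ∈ X, ∀ x ∈ X, r m x then h.choose else 0

def remaining {n : ℕ} (pref : Fin n → Obj → Obj → Prop) (f : ℕ → Fin n)
    (X : Finset Obj) : ℕ → Finset Obj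
  | 0 => X
  | k + 1 => (remaining pref f X k).erase (topOf (pref (f k)) (remaining pref f X k))

def draft {n : ℕ} (pref : Fin n → Obj → Obj → Prop) (f : ℕ → Fin n)
    (X : Finset Obj) (i : Fin n) : Finset Obj :=
  ((Finset.range X.card).filter (fun k => f k = i)).image
    (fun k => topOf (pref (f k)) (remaining pref f X k))

def roundRobin {n : ℕ} (hn : 0 < n) (π : Equiv.Perm (Fin n)) (k : ℕ) : Fin n :=
  π.symm ⟨k % n, Nat.mod_lt k hn⟩

def draftPi {n : ℕ} (hn : 0 < n) (pref : Fin n → Obj → Obj → Prop)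
    (π : Equiv.Perm (Fin n)) (X : Finset Obj) (i : Fin n) : Finset Obj :=
  draft pref (roundRobin hn π) X i


lemma pd_subset (r : Obj → Obj → Prop) (hr : IsLinearOrder Obj r)
    (S T : Finset Obj) (hST : PD r S T) (hTS : PD r T S) : S ⊆ T := by
  obtain ⟨μ, hμinj, hμ⟩ := hST
  obtain ⟨ν, hνinj, hν⟩ := hTS
  -- σ : S → S
  set σ : {x // x ∈ S} → {x // x ∈ S} := fun x => μ (ν x) with hσdef
  have hσinj : Function.Injective σ := hμinj.comp hνinj
  have hstep : ∀ y : {x // x ∈ S}, r (σ y).1 y.1 := by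
    intro y
    exact hr.trans _ _ _ (hμ (ν y)) (hν y)
  -- chain: for m ≥ 1, r (σ^[m] x) (σ x)
  have hchain : ∀ (m : ℕ) (x : {x // x ∈ S}), r (σ^[m+1] x).1 (σ x).1 := by
    intro m
    induction m with
    | zero => intro x; exact hr.refl _
    | succ m ih =>
        intro x
        have h1 : σ^[m+2] x = σ (σ^[m+1] x) := by
          rw [Function.iterate_succ_apply']
        rw [h1]
        exact hr.trans _ _ _ (hstep (σ^[m+1] x)) (ih x)
  -- σ has finite orbits: find k > 0 with σ^[k] x = x
  have hfix : ∀ x : {x // x ∈ S}, σ x = x := by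
    intro x
    have : ∃ a b : ℕ, a < b ∧ σ^[a] x = σ^[b] x := by
      by_contra h
      push_neg at h
      have hinj : Function.Injective (fun n : ℕ => σ^[n] x) := by
        intro a b hab
        by_contra hne
        rcases Nat.lt_or_ge a b with h1 | h1
        · exact h a b h1 hab
        · exact h b a (lt_of_le_of_ne h1 (Ne.symm hne)) hab.symm
      exact not_injective_infinite_finite _ hinj
    obtain ⟨a, b, hab, heq⟩ := this
    have hiter : σ^[b - a] x = x := by
      have : σ^[a] (σ^[b-a] x) = σ^[a] x := by
        rw [← Function.iterate_add_apply, Nat.add_sub_cancel' (le_of_lt hab), heq]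
      exact (Function.Injective.iterate hσinj a) this
    have hk : 1 ≤ b - a := Nat.one_le_iff_ne_zero.mpr (Nat.sub_ne_zero_of_lt hab)
    have h1 : r (σ^[b - a] x).1 (σ x).1 := by
      obtain ⟨m, hm⟩ := Nat.exists_eq_add_of_le hk
      rw [hm, Nat.add_comm]
      exact hchain m x
    rw [hiter] at h1
    have h2 : r (σ x).1 x.1 := hstep x
    exact Subtype.ext (hr.antisymm _ _ h2 h1)
  -- conclude: ν x = x for x ∈ S
  intro a ha
  set x : {x // x ∈ S} := ⟨a, ha⟩
  have h1 : r (ν x).1 x.1 := hν x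
  have h2 : r x.1 (ν x).1 := by
    have := hμ (ν x)
    have hx : μ (ν x) = x := hfix x
    rwa [hx] at this
  have : (ν x).1 = a := hr.antisymm _ _ h1 h2
  rw [← this]
  exact (ν x).2

theorem pd_antisymm (r : Obj → Obj → Prop) (hr : IsLinearOrder Obj r)
    (S T : Finset Obj) (hST : PD r S T) (hTS : PD r T S) : S = T :=
  Finset.Subset.antisymm (pd_subset r hr S T hST hTS) (pd_subset r hr T S hTS hST)
end
end

section
/- For finite sets S, T of objects and a strict linear order ≿, S ≿^PD T holds if and only if |S| ≥ |T| and, writing the elements of each set in decreasing ≿-order, the k-th best element of S is ≿-at-least the k-th best element of T for every k ≤ |T|. -/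
open Finset

noncomputable section

theorem pd_iff_rankwise (r : Obj → Obj → Prop) (hr : IsLinearOrder Obj r)
    (S T : Finset Obj) (LS LT : List Obj)
    (hSn : LS.Nodup) (hSe : LS.toFinset = S) (hSs : LS.Pairwise r)
    (hTn : LT.Nodup) (hTe : LT.toFinset = T) (hTs : LT.Pairwise r) :
    PD r S T ↔
      T.card ≤ S.card ∧
        ∀ k (hkT : k < LT.length) (hkS : k < LS.length),
          r (LS.get ⟨k, hkS⟩) (LT.get ⟨k, hkT⟩) := by
  haveI := hr
  have hScard : S.card = LS.length := by rw [← hSe, List.toFinset_card_of_nodup hSn]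
  have hTcard : T.card = LT.length := by rw [← hTe, List.toFinset_card_of_nodup hTn]
  constructor
  · rintro ⟨μ, hinj, hμ⟩
    have hcard : T.card ≤ S.card := by
      simpa using Fintype.card_le_of_injective μ hinj
    refine ⟨hcard, fun k hkT hkS => ?_⟩
    by_contra hcon
    -- every μ-image of a top-(k+1) element of T lies among the first k elements of LS
    have hmemT : ∀ j : Fin (k + 1), LT.get ⟨j.1, lt_of_le_of_lt (Nat.lt_succ_iff.mp j.2) hkT⟩ ∈ T := by
      intro j; rw [← hTe]; simp [List.get_mem]
    set g : Fin (k + 1) → Obj := fun j =>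
      (μ ⟨LT.get ⟨j.1, lt_of_le_of_lt (Nat.lt_succ_iff.mp j.2) hkT⟩, hmemT j⟩).1 with hg
    have hginj : Function.Injective g := by
      intro a b hab
      have := hinj (Subtype.ext hab)
      have h2 : LT.get ⟨a.1, _⟩ = LT.get ⟨b.1, _⟩ := congrArg Subtype.val this
      have h3 := (List.nodup_iff_injective_get.mp hTn) h2
      have h4 : a.1 = b.1 := by simpa using h3
      exact Fin.ext h4
    have hgdom : ∀ j, r (g j) (LT.get ⟨k, hkT⟩) := by
      intro j
      have h1 : r (g j) (LT.get ⟨j.1, lt_of_le_of_lt (Nat.lt_succ_iff.mp j.2) hkT⟩) := hμ _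
      have h2 : r (LT.get ⟨j.1, lt_of_le_of_lt (Nat.lt_succ_iff.mp j.2) hkT⟩) (LT.get ⟨k, hkT⟩) :=
        hTs.rel_get_of_le (by exact Nat.lt_succ_iff.mp j.2)
      exact _root_.trans h1 h2
    have hmaps : ∀ j, g j ∈ (LS.take k).toFinset := by
      intro j
      have hgS : g j ∈ S := (μ _).2
      rw [← hSe] at hgS
      obtain ⟨i, hi⟩ := List.mem_iff_get.mp (List.mem_toFinset.mp hgS)
      have hik : i.1 < k := by
        by_contra hik
        have h1 : r (LS.get ⟨k, hkS⟩) (LS.get i) :=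
          hSs.rel_get_of_le (by exact Nat.le_of_not_lt hik)
        exact hcon (_root_.trans h1 (hi ▸ hgdom j))
      rw [List.mem_toFinset, ← hi]
      exact List.mem_take_iff_getElem.mpr ⟨i.1, by omega, by simp [List.get_eq_getElem]⟩
    have := Finset.card_le_card_of_injOn g (fun j _ => hmaps j)
      (Function.Injective.injOn hginj) (s := Finset.univ)
    simp only [Finset.card_univ, Fintype.card_fin] at this
    have hle : (LS.take k).toFinset.card ≤ k := by
      calc (LS.take k).toFinset.card ≤ (LS.take k).length := List.toFinset_card_le _
        _ ≤ k := List.length_take_le _ _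
    omega
  · rintro ⟨hcard, hrank⟩
    have hlen : LT.length ≤ LS.length := by omega
    refine ⟨fun x => ⟨LS.get ⟨LT.idxOf x.1, ?_⟩, ?_⟩, ?_, ?_⟩
    · exact lt_of_lt_of_le (List.idxOf_lt_length_iff.mpr (by rw [← List.mem_toFinset, hTe]; exact x.2)) hlen
    · rw [← hSe, List.mem_toFinset]; exact List.get_mem _ _
    · intro a b hab
      have h2 : LT.idxOf a.1 = LT.idxOf b.1 := by
        have := congrArg Subtype.val hab
        have := (List.nodup_iff_injective_get.mp hSn) this
        exact congrArg Fin.val this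
      have haT : a.1 ∈ LT := by rw [← List.mem_toFinset, hTe]; exact a.2
      have hbT : b.1 ∈ LT := by rw [← List.mem_toFinset, hTe]; exact b.2
      exact Subtype.ext ((List.idxOf_inj haT).mp h2)
    · intro x
      have hxT : x.1 ∈ LT := by rw [← List.mem_toFinset, hTe]; exact x.2
      have hidx : LT.idxOf x.1 < LT.length := List.idxOf_lt_length_iff.mpr hxT
      have := hrank (LT.idxOf x.1) hidx (lt_of_lt_of_le hidx hlen)
      rwa [List.idxOf_get] at this
end
end

section
/- If S ≿^PD T and S ≠ T are finite sets with |S| = |T| ≥ 1, and elements of each are listed in decreasing preference order x_1 ≻ ⋯ ≻ x_k (for S) and y_1 ≻ ⋯ ≻ y_k (for T) with T ≿^PD S via the canonical rank-preserving injection, then the top element of S \ T is strictly preferred to the top element of T \ S. -/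
open Finset

noncomputable section

theorem top_surplus_strictly_preferred (r : Obj → Obj → Prop) (hr : IsLinearOrder Obj r)
    (S T : Finset Obj) (hne : S ≠ T) (k : ℕ) (hk : 1 ≤ k)
    (hScard : S.card = k) (hTcard : T.card = k)
    (xs ys : Fin k → Obj)
    (hxsS : ∀ a, a ∈ S ↔ ∃ j, xs j = a) (hysT : ∀ a, a ∈ T ↔ ∃ j, ys j = a)
    (hxsdec : ∀ j j' : Fin k, j < j' → r (xs j) (xs j') ∧ xs j ≠ xs j')
    (hysdec : ∀ j j' : Fin k, j < j' → r (ys j) (ys j') ∧ ys j ≠ ys j')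
    (hdom : ∀ j : Fin k, r (xs j) (ys j)) :
    ∀ a ∈ S \ T, (∀ b ∈ S \ T, r a b) →
      ∀ c ∈ T \ S, (∀ d ∈ T \ S, r c d) → r a c ∧ a ≠ c := by
  intro a haST hatop c hcTS _
  have hrefl : ∀ x, r x x := fun x => hr.toIsPartialOrder.toIsPreorder.refl x
  have htrans : ∀ x y z, r x y → r y z → r x z :=
    fun x y z => hr.toIsPartialOrder.toIsPreorder.trans x y z
  have hanti : ∀ x y, r x y → r y x → x = y :=
    fun x y => hr.toIsPartialOrder.toAntisymm.antisymm x y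
  rw [Finset.mem_sdiff] at haST hcTS
  obtain ⟨haS, haT⟩ := haST
  obtain ⟨hcT, hcS⟩ := hcTS
  have hex : (Finset.univ.filter (fun j : Fin k => xs j ≠ ys j)).Nonempty := by
    by_contra h
    rw [Finset.not_nonempty_iff_eq_empty, Finset.filter_eq_empty_iff] at h
    have heq : ∀ j : Fin k, xs j = ys j := fun j => not_not.mp (h (Finset.mem_univ j))
    apply hne
    ext z
    rw [hxsS, hysT]
    constructor
    · rintro ⟨j, rfl⟩; exact ⟨j, (heq j).symm⟩
    · rintro ⟨j, rfl⟩; exact ⟨j, heq j⟩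
  set j0 := (Finset.univ.filter (fun j : Fin k => xs j ≠ ys j)).min' hex with hj0
  have hj0mem := Finset.min'_mem _ hex
  rw [Finset.mem_filter] at hj0mem
  have hj0ne : xs j0 ≠ ys j0 := hj0mem.2
  have hmin : ∀ i : Fin k, i < j0 → xs i = ys i := by
    intro i hi
    by_contra hne'
    have : j0 ≤ i := Finset.min'_le _ _ (Finset.mem_filter.mpr ⟨Finset.mem_univ i, hne'⟩)
    exact absurd hi (not_lt.mpr this)
  have hxj0T : xs j0 ∉ T := by
    intro hmem
    obtain ⟨i, hi⟩ := (hysT _).mp hmem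
    rcases lt_trichotomy i j0 with h | h | h
    · exact (hxsdec i j0 h).2 ((hmin i h).trans hi)
    · subst h; exact hj0ne hi.symm
    · have h1 : r (ys j0) (xs j0) := hi ▸ (hysdec j0 i h).1
      exact hj0ne (hanti _ _ (hdom j0) h1)
  have hra : r a (xs j0) :=
    hatop _ (Finset.mem_sdiff.mpr ⟨(hxsS _).mpr ⟨j0, rfl⟩, hxj0T⟩)
  obtain ⟨i, hic⟩ := (hysT c).mp hcT
  have hile : j0 ≤ i := by
    by_contra h
    push_neg at h
    exact hcS ((hxsS c).mpr ⟨i, (hmin i h).trans hic⟩)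
  have hyc : r (ys j0) c := by
    rcases eq_or_lt_of_le hile with h | h
    · rw [← hic, ← h]; exact hrefl _
    · exact hic ▸ (hysdec j0 i h).1
  refine ⟨htrans _ _ _ hra (htrans _ _ _ (hdom j0) hyc), ?_⟩
  rintro rfl
  exact haT hcT
end
end

section
/- An allocation rule on problems (≿, X) — with N a fixed finite set of n ≥ 2 agents, X a finite nonempty set of available objects, and agents having strict linear preferences over all potential objects — is Pareto efficient with respect to pairwise dominance if and only if it is non-wasteful (allocates all of X) and robust against trades (the binary relation ▶ on agent–object pairs defined by (i,x) ▶ (j,y) iff x is assigned to i, y ≻_i x, and i ≠ j, is acyclic). -/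
open Finset

noncomputable section

private lemma pd_of_subset {r : Obj → Obj → Prop} (hrefl : ∀ x, r x x) {S T : Finset Obj}
    (h : T ⊆ S) : PD r S T := by
  refine ⟨fun x => ⟨x.1, h x.2⟩, ?_, fun x => hrefl x.1⟩
  intro a b hab
  apply Subtype.ext
  have := congrArg Subtype.val hab
  simpa using this

private lemma transGen_path {α : Type*} {R : α → α → Prop} {a b : α}
    (h : Relation.TransGen R a b) :
    ∃ m, 0 < m ∧ ∃ x : ℕ → α, x 0 = a ∧ x m = b ∧ ∀ t < m, R (x t) (x (t + 1)) := by
  induction h with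
  | @single c hac =>
    refine ⟨1, one_pos, fun t => if t = 0 then a else c, by simp, by simp, ?_⟩
    intro t ht
    have ht0 : t = 0 := by omega
    subst ht0
    simpa using hac
  | @tail b' c hb hbc ih =>
    obtain ⟨m, hm, x, hx0, hxm, hstep⟩ := ih
    refine ⟨m + 1, by omega, fun t => if t = m + 1 then c else x t, ?_, by simp, ?_⟩
    · simp only [if_neg (by omega : ¬ (0 = m + 1))]; exact hx0
    · intro t ht
      by_cases htm : t = m
      · simp only [if_neg (show ¬ (t = m + 1) by omega), if_pos (show t + 1 = m + 1 by omega)]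
        rw [htm, hxm]; exact hbc
      · have ht' : t < m := by omega
        simp only [if_neg (by omega : ¬ (t = m + 1)), if_neg (by omega : ¬ (t + 1 = m + 1))]
        exact hstep t ht'

private lemma exists_simple_cycle {α : Type*} {R : α → α → Prop} (hirr : ∀ x, ¬ R x x)
    {a : α} (h : Relation.TransGen R a a) :
    ∃ m, 2 ≤ m ∧ ∃ x : ℕ → α, (∀ t < m, R (x t) (x (t + 1))) ∧ x m = x 0 ∧
      ∀ s t, s < m → t < m → x s = x t → s = t := by
  classical
  have hQ : ∃ m, 0 < m ∧ ∃ x : ℕ → α, (∀ t < m, R (x t) (x (t + 1))) ∧ x m = x 0 := by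
    obtain ⟨m, hm, x, hx0, hxm, hstep⟩ := transGen_path h
    exact ⟨m, hm, x, hstep, by rw [hxm, hx0]⟩
  obtain ⟨hm0, x, hstep, hwrap⟩ := Nat.find_spec hQ
  set m := Nat.find hQ with hmdef
  have hmin : ∀ k, k < m → ¬ (0 < k ∧ ∃ x : ℕ → α, (∀ t < k, R (x t) (x (t + 1))) ∧ x k = x 0) :=
    fun k hk => Nat.find_min hQ hk
  have hm1 : m ≠ 1 := by
    intro h1
    have hst := hstep 0 (by omega)
    rw [h1] at hwrap
    rw [hwrap] at hst
    exact hirr _ hst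
  have key : ∀ s t, s < t → t < m → x s ≠ x t := by
    intro s t hst htm heq
    apply hmin (t - s) (by omega)
    refine ⟨by omega, fun u => x (s + u), ?_, ?_⟩
    · intro u hu
      dsimp only
      have e : s + (u + 1) = (s + u) + 1 := by omega
      rw [e]
      exact hstep (s + u) (by omega)
    · dsimp only
      have e1 : s + (t - s) = t := by omega
      have e2 : s + 0 = s := by omega
      rw [e1, e2]
      exact heq.symm
  refine ⟨m, by omega, x, hstep, hwrap, ?_⟩
  intro s t hs ht heq
  rcases lt_trichotomy s t with h | h | h
  · exact absurd heq (key s t h ht)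
  · exact h
  · exact absurd heq.symm (key t s h hs)

private lemma cycle_of_trade {n : ℕ} {pref : Fin n → Obj → Obj → Prop}
    {AA : Fin n → Finset Obj}
    (hrefl : ∀ i x, pref i x x)
    (htrans : ∀ (i : Fin n) {a b c : Obj}, pref i a b → pref i b c → pref i a c)
    {m : ℕ} (hm : 1 ≤ m) {w : ℕ → Obj} {j : ℕ → Fin n}
    (hmem : ∀ u, u < m → w u ∈ AA (j u))
    (hstep : ∀ u, u < m → pref (j u) (w (u + 1)) (w u))
    (hwrap : w m = w 0) (hj : j (m - 1) ≠ j 0)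
    (hinj : ∀ a b, a < b → b < m → w a ≠ w b) :
    Relation.TransGen
      (fun p q : Fin n × Obj => p.2 ∈ AA p.1 ∧ pref p.1 q.2 p.2 ∧ q.2 ≠ p.2 ∧ p.1 ≠ q.1)
      (j 0, w 0) (j 0, w 0) := by
  set E : Fin n × Obj → Fin n × Obj → Prop :=
    fun p q => p.2 ∈ AA p.1 ∧ pref p.1 q.2 p.2 ∧ q.2 ≠ p.2 ∧ p.1 ≠ q.1 with hE
  have key : ∀ s, s ≤ m - 1 → ∃ r, r ≤ s ∧
      Relation.ReflTransGen E (j 0, w 0) (j r, w r) ∧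
      (∀ u, r ≤ u → u ≤ s → j u = j r) ∧ pref (j r) (w s) (w r) := by
    intro s
    induction s with
    | zero =>
      intro _
      refine ⟨0, le_rfl, Relation.ReflTransGen.refl, ?_, hrefl _ _⟩
      intro u h1 h2
      have : u = 0 := by omega
      rw [this]
    | succ s ih =>
      intro hs
      obtain ⟨r, hr, hpath, hsame, hpref⟩ := ih (by omega)
      have hsm : s < m := by omega
      have hjs : j s = j r := hsame s hr le_rfl
      have hpref' : pref (j r) (w (s + 1)) (w r) :=
        htrans _ (hjs ▸ hstep s hsm) hpref
      by_cases hj' : j (s + 1) = j r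
      · refine ⟨r, by omega, hpath, ?_, hpref'⟩
        intro u h1 h2
        by_cases hu : u ≤ s
        · exact hsame u h1 hu
        · have : u = s + 1 := by omega
          rw [this]; exact hj'
      · refine ⟨s + 1, le_rfl, hpath.tail ?_, ?_, hrefl _ _⟩
        · exact ⟨hmem r (by omega), hpref',
            (hinj r (s + 1) (by omega) (by omega)).symm, fun h => hj' h.symm⟩
        · intro u h1 h2
          have : u = s + 1 := by omega
          rw [this]
  obtain ⟨r, hr, hpath, hsame, hpref⟩ := key (m - 1) le_rfl
  have hjm : j (m - 1) = j r := hsame (m - 1) hr le_rfl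
  have hrne : j r ≠ j 0 := hjm ▸ hj
  have hr0 : 0 < r := by
    rcases Nat.eq_zero_or_pos r with h | h
    · exact absurd rfl (h ▸ hrne)
    · exact h
  have hlast : pref (j r) (w m) (w r) := by
    have h1 : pref (j (m - 1)) (w m) (w (m - 1)) := by
      have := hstep (m - 1) (by omega)
      rwa [show m - 1 + 1 = m from by omega] at this
    exact htrans _ (hjm ▸ h1) hpref
  have hedge : E (j r, w r) (j 0, w 0) :=
    ⟨hmem r (by omega), hwrap ▸ hlast, hinj 0 r hr0 (by omega), hrne⟩
  exact Relation.TransGen.tail' hpath hedge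

private lemma transGen_first {α : Type*} {R : α → α → Prop} {a b : α}
    (h : Relation.TransGen R a b) : ∃ c, R a c := by
  induction h with
  | @single c hac => exact ⟨c, hac⟩
  | @tail b' c hb hbc ih => exact ih


theorem efficient_iff_nonwasteful_and_robust {n : ℕ} (hn : 2 ≤ n)
    (φ : (Fin n → Obj → Obj → Prop) → Finset Obj → Fin n → Finset Obj)
    (hvalid : ∀ pref, LinProfile pref → ∀ X : Finset Obj, X.Nonempty →
      IsAlloc (φ pref X) X) :
    (∀ pref, LinProfile pref → ∀ X : Finset Obj, X.Nonempty →
        ¬ ∃ B : Fin n → Finset Obj, IsAlloc B X ∧ B ≠ φ pref X ∧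
          ∀ i, PD (pref i) (B i) (φ pref X i)) ↔
      ((∀ pref, LinProfile pref → ∀ X : Finset Obj, X.Nonempty →
          Finset.univ.biUnion (φ pref X) = X) ∧
        (∀ pref, LinProfile pref → ∀ X : Finset Obj, X.Nonempty →
          ∀ p : Fin n × Obj,
            ¬ Relation.TransGen
              (fun p q : Fin n × Obj =>
                p.2 ∈ φ pref X p.1 ∧ pref p.1 q.2 p.2 ∧ q.2 ≠ p.2 ∧ p.1 ≠ q.1)
              p p)) := by
  constructor
  · intro heff
    classical
    have i0 : Fin n := ⟨0, by omega⟩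
    constructor
    · -- non-wastefulness
      intro pref hlin X hX
      have heffX := heff pref hlin X hX
      obtain ⟨hsub, hdisj⟩ := hvalid pref hlin X hX
      set A := φ pref X with hA
      have hrefl : ∀ (i : Fin n) x, pref i x x := fun i x => by
        haveI := hlin i; exact refl_of (pref i) x
      by_contra hne
      have hbsub : Finset.univ.biUnion A ⊆ X := by
        intro o ho
        obtain ⟨i, -, hi⟩ := Finset.mem_biUnion.1 ho
        exact hsub i hi
      obtain ⟨z, hzX, hz⟩ : ∃ z ∈ X, z ∉ Finset.univ.biUnion A := by
        by_contra h
        push_neg at h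
        exact hne (Finset.Subset.antisymm hbsub h)
      have hznot : ∀ j, z ∉ A j := fun j hj =>
        hz (Finset.mem_biUnion.2 ⟨j, Finset.mem_univ j, hj⟩)
      apply heffX
      refine ⟨Function.update A i0 (insert z (A i0)), ⟨?_, ?_⟩, ?_, ?_⟩
      · intro i
        by_cases hi : i = i0
        · rw [hi, Function.update_self]
          intro o ho
          rcases Finset.mem_insert.1 ho with h | h
          · rw [h]; exact hzX
          · exact hsub _ h
        · rw [Function.update_of_ne hi]
          exact hsub i
      · intro i j hij
        have key : ∀ a b : Fin n, a ≠ b → Disjoint (insert z (A a)) (A b) := by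
          intro a b hab
          rw [Finset.disjoint_insert_left]
          exact ⟨hznot b, hdisj a b hab⟩
        by_cases hi : i = i0
        · have hj0 : j ≠ i0 := fun h => hij (hi.trans h.symm)
          rw [hi, Function.update_self, Function.update_of_ne hj0]
          exact key i0 j (Ne.symm hj0)
        · by_cases hj : j = i0
          · rw [hj, Function.update_of_ne hi, Function.update_self]
            exact (key i0 i (Ne.symm hi)).symm
          · rw [Function.update_of_ne hi, Function.update_of_ne hj]
            exact hdisj i j hij
      · intro hBA
        have := congrFun hBA i0
        rw [Function.update_self] at this
        exact hznot i0 (this ▸ Finset.mem_insert_self z (A i0))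
      · intro i
        by_cases hi : i = i0
        · rw [hi, Function.update_self]
          exact pd_of_subset (hrefl i0) (Finset.subset_insert z (A i0))
        · rw [Function.update_of_ne hi]
          exact pd_of_subset (hrefl i) Finset.Subset.rfl
    · -- robustness against trades
      intro pref hlin X hX p hcyc
      have heffX := heff pref hlin X hX
      obtain ⟨hsub, hdisj⟩ := hvalid pref hlin X hX
      set A := φ pref X with hA
      have hrefl : ∀ (i : Fin n) x, pref i x x := fun i x => by
        haveI := hlin i; exact refl_of (pref i) x
      have huniq : ∀ {o : Obj} {i j : Fin n}, o ∈ A i → o ∈ A j → i = j := by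
        intro o i j hi hj
        by_contra hij
        exact (Finset.disjoint_left.1 (hdisj i j hij)) hi hj
      -- the object-level relation
      set R : Obj → Obj → Prop :=
        fun x y => y ≠ x ∧ ∃ i j : Fin n, i ≠ j ∧ x ∈ A i ∧ y ∈ A j ∧ pref i y x with hR
      have htrans_cyc : ∀ q : Fin n × Obj,
          Relation.TransGen (fun p q : Fin n × Obj =>
            p.2 ∈ A p.1 ∧ pref p.1 q.2 p.2 ∧ q.2 ≠ p.2 ∧ p.1 ≠ q.1) p q →
          q.2 ∈ A q.1 → Relation.TransGen R p.2 q.2 := by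
        intro q hq
        induction hq with
        | @single b h =>
          intro hqA
          exact Relation.TransGen.single ⟨h.2.2.1, p.1, b.1, h.2.2.2, h.1, hqA, h.2.1⟩
        | @tail b c hab hbc ih =>
          intro hqA
          exact (ih hbc.1).tail ⟨hbc.2.2.1, b.1, c.1, hbc.2.2.2, hbc.1, hqA, hbc.2.1⟩
      have hpA : p.2 ∈ A p.1 := by
        obtain ⟨c, hc⟩ := transGen_first hcyc
        exact hc.1
      have hRcyc : Relation.TransGen R p.2 p.2 := htrans_cyc p hcyc hpA
      have hirr : ∀ o : Obj, ¬ R o o := fun o h => h.1 rfl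
      obtain ⟨m, hm2, x, hstep, hwrap, hinj⟩ := exists_simple_cycle hirr hRcyc
      -- owner function
      obtain ⟨ow, how⟩ : ∃ ow : Obj → Fin n, ∀ (o : Obj) (i : Fin n), o ∈ A i → ow o = i := by
        refine ⟨fun o => if h : ∃ i, o ∈ A i then h.choose else i0, ?_⟩
        intro o i hi
        dsimp only
        rw [dif_pos ⟨i, hi⟩]
        exact huniq (Exists.choose_spec (⟨i, hi⟩ : ∃ i, o ∈ A i)) hi
      have hxA : ∀ t, t < m → x t ∈ A (ow (x t)) := by
        intro t ht
        obtain ⟨-, i, j, hij, hxi, hyj, hp⟩ := hstep t ht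
        rw [how _ _ hxi]
        exact hxi
      have hprefstep : ∀ t, t < m → pref (ow (x t)) (x (t + 1)) (x t) := by
        intro t ht
        obtain ⟨-, i, j, hij, hxi, hyj, hp⟩ := hstep t ht
        rw [how _ _ hxi]
        exact hp
      have hownne : ∀ t, t < m → ow (x t) ≠ ow (x (t + 1)) := by
        intro t ht
        obtain ⟨-, i, j, hij, hxi, hyj, hp⟩ := hstep t ht
        rw [how _ _ hxi, how _ _ hyj]
        exact hij
      have hmodlt : ∀ t : ℕ, (t + 1) % m < m := fun t => Nat.mod_lt _ (by omega)
      have hmodeq : ∀ t, t < m → x ((t + 1) % m) = x (t + 1) := by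
        intro t ht
        by_cases ht1 : t + 1 = m
        · rw [ht1, Nat.mod_self]
          exact hwrap.symm
        · rw [Nat.mod_eq_of_lt (by omega)]
      -- the trading map
      obtain ⟨σc, hσpos, hσneg⟩ : ∃ σc : Obj → Obj,
          (∀ t, t < m → σc (x t) = x ((t + 1) % m)) ∧
          (∀ o, (¬ ∃ t, t < m ∧ x t = o) → σc o = o) := by
        refine ⟨fun o => if h : ∃ t, t < m ∧ x t = o then x ((h.choose + 1) % m) else o, ?_, ?_⟩
        · intro t ht
          dsimp only
          rw [dif_pos (⟨t, ht, rfl⟩ : ∃ t', t' < m ∧ x t' = x t)]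
          have hc := Exists.choose_spec (⟨t, ht, rfl⟩ : ∃ t', t' < m ∧ x t' = x t)
          have : (⟨t, ht, rfl⟩ : ∃ t', t' < m ∧ x t' = x t).choose = t :=
            hinj _ _ hc.1 ht hc.2
          rw [this]
        · intro o ho
          dsimp only
          rw [dif_neg ho]
      have hσcinj : Function.Injective σc := by
        intro a b hab
        by_cases ha : ∃ t, t < m ∧ x t = a <;> by_cases hb : ∃ t, t < m ∧ x t = b
        · obtain ⟨s', hs', rfl⟩ := ha
          obtain ⟨t', ht', rfl⟩ := hb
          rw [hσpos _ hs', hσpos _ ht'] at hab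
          have he : (s' + 1) % m = (t' + 1) % m := hinj _ _ (hmodlt s') (hmodlt t') hab
          have hmod : s' % m = t' % m := Nat.ModEq.add_right_cancel' 1 he
          rw [Nat.mod_eq_of_lt hs', Nat.mod_eq_of_lt ht'] at hmod
          rw [hmod]
        · exfalso
          obtain ⟨s', hs', rfl⟩ := ha
          rw [hσpos _ hs', hσneg b hb] at hab
          exact hb ⟨(s' + 1) % m, hmodlt s', hab⟩
        · exfalso
          obtain ⟨t', ht', rfl⟩ := hb
          rw [hσpos _ ht', hσneg a ha] at hab
          exact ha ⟨(t' + 1) % m, hmodlt t', hab.symm⟩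
        · rw [hσneg a ha, hσneg b hb] at hab
          exact hab
      have hxX : ∀ t, t < m → x t ∈ X := fun t ht => hsub _ (hxA t ht)
      apply heffX
      refine ⟨fun i => (A i).image σc, ⟨?_, ?_⟩, ?_, ?_⟩
      · -- subsets
        intro i o' ho'
        obtain ⟨o, ho, rfl⟩ := Finset.mem_image.1 ho'
        by_cases hc : ∃ t, t < m ∧ x t = o
        · obtain ⟨t, ht, rfl⟩ := hc
          rw [hσpos t ht]
          exact hxX _ (hmodlt t)
        · rw [hσneg o hc]
          exact hsub i ho
      · -- disjoint
        intro i j hij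
        rw [Finset.disjoint_left]
        intro o' h1 h2
        obtain ⟨o1, h1', he1⟩ := Finset.mem_image.1 h1
        obtain ⟨o2, h2', he2⟩ := Finset.mem_image.1 h2
        have : o1 = o2 := hσcinj (he1.trans he2.symm)
        rw [this] at h1'
        exact hij (huniq h1' h2')
      · -- B ≠ A
        intro hBA
        have hx0 : x 0 ∈ A (ow (x 0)) := hxA 0 (by omega)
        have hx0' : x 0 ∈ (A (ow (x 0))).image σc := by
          rw [congrFun hBA (ow (x 0))]
          exact hx0
        obtain ⟨o, ho, heo⟩ := Finset.mem_image.1 hx0'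
        by_cases hc : ∃ t, t < m ∧ x t = o
        · obtain ⟨t', ht', rfl⟩ := hc
          rw [hσpos _ ht'] at heo
          have h0 : (t' + 1) % m = 0 := hinj _ _ (hmodlt t') (by omega) heo
          have ht'' : t' = m - 1 := by
            rcases Nat.lt_or_ge (t' + 1) m with h | h
            · rw [Nat.mod_eq_of_lt h] at h0; omega
            · omega
          rw [ht''] at ho
          have e1 : ow (x (m - 1)) = ow (x 0) := how _ _ ho
          have e2 : ow (x (m - 1)) ≠ ow (x 0) := by
            have h := hownne (m - 1) (by omega)
            rwa [show m - 1 + 1 = m from by omega, hwrap] at h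
          exact e2 e1
        · rw [hσneg o hc] at heo
          exact hc ⟨0, by omega, heo.symm⟩
      · -- PD
        intro i
        refine ⟨fun o => ⟨σc o.1, Finset.mem_image_of_mem σc o.2⟩, ?_, ?_⟩
        · intro a b hab
          have := congrArg Subtype.val hab
          simp only at this
          exact Subtype.ext (hσcinj this)
        · intro o
          by_cases hc : ∃ t, t < m ∧ x t = o.1
          · obtain ⟨t, ht, he⟩ := hc
            have hoi : x t ∈ A i := he ▸ o.2
            have e : ow (x t) = i := how _ _ hoi
            show pref i (σc o.1) o.1
            rw [← he, hσpos t ht, hmodeq t ht, ← e]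
            exact hprefstep t ht
          · show pref i (σc o.1) o.1
            rw [hσneg o.1 hc]
            exact hrefl i o.1
  · rintro ⟨hnw, hac⟩
    classical
    have i0 : Fin n := ⟨0, by omega⟩
    rintro pref hlin X hX ⟨B, ⟨hBsub, hBdisj⟩, hBne, hPD⟩
    obtain ⟨hAsub, hAdisj⟩ := hvalid pref hlin X hX
    have hAX := hnw pref hlin X hX
    have hacq := hac pref hlin X hX
    set A := φ pref X with hA
    have hrefl : ∀ (i : Fin n) x, pref i x x := fun i x => by
      haveI := hlin i; exact refl_of (pref i) x
    have htrans : ∀ (i : Fin n) {a b c : Obj}, pref i a b → pref i b c → pref i a c := by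
      intro i a b c h1 h2
      haveI := hlin i
      exact _root_.trans h1 h2
    have hantisymm : ∀ (i : Fin n) {a b : Obj}, pref i a b → pref i b a → a = b := by
      intro i a b h1 h2
      haveI := hlin i
      exact _root_.antisymm h1 h2
    have huniq : ∀ {o : Obj} {i j : Fin n}, o ∈ A i → o ∈ A j → i = j := by
      intro o i j hi hj
      by_contra hij
      exact (Finset.disjoint_left.1 (hAdisj i j hij)) hi hj
    have hassigned : ∀ o, o ∈ X → ∃ i, o ∈ A i := by
      intro o ho
      rw [← hAX] at ho
      obtain ⟨i, -, hi⟩ := Finset.mem_biUnion.1 ho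
      exact ⟨i, hi⟩
    -- the pairwise-dominance injections
    have hPD' : ∀ i, ∃ μ : {x // x ∈ A i} → {x // x ∈ B i},
        Function.Injective μ ∧ ∀ x, pref i (μ x).1 x.1 := hPD
    choose μ hμinj hμpref using hPD'
    -- cardinalities
    have hcard_le : ∀ i, (A i).card ≤ (B i).card := by
      intro i
      have := Fintype.card_le_of_injective (μ i) (hμinj i)
      simpa [Fintype.card_coe] using this
    have hsumA : ∑ i : Fin n, (A i).card = X.card := by
      rw [← hAX]
      exact (Finset.card_biUnion (fun i _ j _ hij => hAdisj i j hij)).symm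
    have hsumB : ∑ i : Fin n, (B i).card ≤ X.card := by
      calc ∑ i : Fin n, (B i).card = (Finset.univ.biUnion B).card :=
            (Finset.card_biUnion (fun i _ j _ hij => hBdisj i j hij)).symm
        _ ≤ X.card := Finset.card_le_card (by
            intro o ho
            obtain ⟨i, -, hi⟩ := Finset.mem_biUnion.1 ho
            exact hBsub i hi)
    have hsum_eq : ∑ i : Fin n, (A i).card = ∑ i : Fin n, (B i).card :=
      le_antisymm (Finset.sum_le_sum fun i _ => hcard_le i) (hsumA ▸ hsumB)
    have hcard_eq : ∀ i, (A i).card = (B i).card := by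
      have := (Finset.sum_eq_sum_iff_of_le (fun i _ => hcard_le i)).1 hsum_eq
      exact fun i => this i (Finset.mem_univ i)
    -- the owner function
    obtain ⟨ow, how⟩ : ∃ ow : Obj → Fin n, ∀ (o : Obj) (i : Fin n), o ∈ A i → ow o = i := by
      refine ⟨fun o => if h : ∃ i, o ∈ A i then h.choose else i0, ?_⟩
      intro o i hi
      dsimp only
      rw [dif_pos ⟨i, hi⟩]
      exact huniq (Exists.choose_spec (⟨i, hi⟩ : ∃ i, o ∈ A i)) hi
    -- the global improvement map
    obtain ⟨σ, hσval, hσid⟩ : ∃ σ : Obj → Obj,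
        (∀ (o : Obj) (i : Fin n) (ho : o ∈ A i), σ o = ((μ i) ⟨o, ho⟩).1) ∧
        ∀ o, (¬ ∃ i, o ∈ A i) → σ o = o := by
      refine ⟨fun o => if h : ∃ i, o ∈ A i then ((μ h.choose) ⟨o, h.choose_spec⟩).1 else o,
        ?_, ?_⟩
      · intro o i ho
        dsimp only
        rw [dif_pos ⟨i, ho⟩]
        have hc : (⟨i, ho⟩ : ∃ i, o ∈ A i).choose = i :=
          huniq (Exists.choose_spec (⟨i, ho⟩ : ∃ i, o ∈ A i)) ho
        have key : ∀ (j : Fin n) (e : j = i) (hoj : o ∈ A j),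
            ((μ j) ⟨o, hoj⟩).1 = ((μ i) ⟨o, ho⟩).1 := by
          rintro j rfl hoj; rfl
        exact key _ hc _
      · intro o ho
        dsimp only
        rw [dif_neg ho]
    have hσB : ∀ (o : Obj) (i : Fin n), o ∈ A i → σ o ∈ B i := by
      intro o i ho
      rw [hσval o i ho]
      exact ((μ i) ⟨o, ho⟩).2
    have hσpref : ∀ (o : Obj) (i : Fin n), o ∈ A i → pref i (σ o) o := by
      intro o i ho
      rw [hσval o i ho]
      exact hμpref i ⟨o, ho⟩
    have hσinj : Function.Injective σ := by
      intro a b hab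
      by_cases ha : ∃ i, a ∈ A i <;> by_cases hb : ∃ i, b ∈ A i
      · obtain ⟨i, hai⟩ := ha
        obtain ⟨j, hbj⟩ := hb
        by_cases hij : i = j
        · subst hij
          rw [hσval a i hai, hσval b i hbj] at hab
          have := hμinj i (Subtype.ext hab)
          exact congrArg Subtype.val this
        · exfalso
          have h1 : σ a ∈ B i := hσB a i hai
          have h2 : σ b ∈ B j := hσB b j hbj
          rw [hab] at h1
          exact (Finset.disjoint_left.1 (hBdisj i j hij)) h1 h2
      · exfalso
        obtain ⟨i, hai⟩ := ha
        have h1 : σ a ∈ B i := hσB a i hai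
        have hbX : b ∉ X := fun hbc => hb (hassigned b hbc)
        exact hbX (by rw [← hσid b hb, ← hab]; exact hBsub i h1)
      · exfalso
        obtain ⟨i, hbi⟩ := hb
        have h1 : σ b ∈ B i := hσB b i hbi
        have haX : a ∉ X := fun hac' => ha (hassigned a hac')
        exact haX (by rw [← hσid a ha, hab]; exact hBsub i h1)
      · rw [hσid a ha, hσid b hb] at hab
        exact hab
    have hσX : ∀ o, o ∈ X → σ o ∈ X := by
      intro o ho
      obtain ⟨i, hi⟩ := hassigned o ho
      exact hBsub i (hσB o i hi)
    -- a non-fixed point exists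
    obtain ⟨iz, z, hzA, hzfix⟩ : ∃ i, ∃ o ∈ A i, σ o ≠ o := by
      by_contra hfix
      push_neg at hfix
      apply hBne
      funext i
      have hAB : A i ⊆ B i := fun o ho => by
        rw [← hfix i o ho]; exact hσB o i ho
      exact (Finset.eq_of_subset_of_card_le hAB (le_of_eq (hcard_eq i).symm)).symm
    have hzX : z ∈ X := hAsub iz hzA
    -- iterates of z
    have hyX : ∀ k, σ^[k] z ∈ X := by
      intro k
      induction k with
      | zero => exact hzX
      | succ k ih => rw [Function.iterate_succ_apply']; exact hσX _ ih
    have hyA : ∀ k, σ^[k] z ∈ A (ow (σ^[k] z)) := by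
      intro k
      obtain ⟨i, hi⟩ := hassigned _ (hyX k)
      rw [how _ i hi]
      exact hi
    have hstep' : ∀ k, pref (ow (σ^[k] z)) (σ^[k + 1] z) (σ^[k] z) := by
      intro k
      rw [Function.iterate_succ_apply']
      exact hσpref _ _ (hyA k)
    have hysucc : ∀ k, σ^[k + 1] z = σ (σ^[k] z) := fun k => Function.iterate_succ_apply' σ k z
    -- the period
    have hper : ∃ k, 0 < k ∧ σ^[k] z = z := by
      have hmaps : ∀ k : Fin (X.card + 1), k ∈ (Finset.univ : Finset (Fin (X.card + 1))) →
          σ^[k.1] z ∈ X := fun k _ => hyX k.1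
      obtain ⟨a, -, b, -, hab, heq⟩ := Finset.exists_ne_map_eq_of_card_lt_of_maps_to
        (by simp) hmaps
      have hpeel : ∀ p q : ℕ, p < q → σ^[p] z = σ^[q] z → σ^[q - p] z = z := by
        intro p q hpq he
        apply (hσinj.iterate p)
        rw [← Function.iterate_add_apply, show p + (q - p) = q from by omega]
        exact he.symm
      rcases Nat.lt_or_ge a.1 b.1 with h | h
      · exact ⟨b.1 - a.1, by omega, hpeel a.1 b.1 h heq⟩
      · have h' : b.1 < a.1 := by
          rcases Nat.lt_or_ge b.1 a.1 with h2 | h2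
          · exact h2
          · exact absurd (Fin.ext (by omega)) hab
        exact ⟨a.1 - b.1, by omega, hpeel b.1 a.1 h' heq.symm⟩
    set m := Nat.find hper with hmdef
    have hm0 : 0 < m := (Nat.find_spec hper).1
    have hm2 : σ^[m] z = z := (Nat.find_spec hper).2
    have hmin : ∀ k, k < m → ¬ (0 < k ∧ σ^[k] z = z) := fun k hk => Nat.find_min hper hk
    have hiterinj : ∀ a b, a < b → b - a < m → σ^[a] z ≠ σ^[b] z := by
      intro a b hab hd heq
      apply hmin (b - a) hd
      refine ⟨by omega, ?_⟩
      apply (hσinj.iterate a)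
      rw [← Function.iterate_add_apply, show a + (b - a) = b from by omega]
      exact heq.symm
    have hperiod : ∀ k, σ^[k + m] z = σ^[k] z := by
      intro k
      rw [Function.iterate_add_apply, hm2]
    have hnofix : ∀ k, σ (σ^[k] z) ≠ σ^[k] z := by
      intro k h
      apply hzfix
      apply (hσinj.iterate k)
      rw [← Function.iterate_succ_apply, Function.iterate_succ_apply']
      exact h
    by_cases hall : ∀ t, t < m → ow (σ^[t] z) = ow z
    · -- all owners equal : contradiction with antisymmetry
      have chain : ∀ s, s + 1 ≤ m → pref (ow z) (σ^[s + 1] z) (σ^[1] z) := by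
        intro s
        induction s with
        | zero => intro _; exact hrefl _ _
        | succ s ih =>
          intro hs
          have h1 : pref (ow (σ^[s + 1] z)) (σ^[s + 1 + 1] z) (σ^[s + 1] z) := hstep' (s + 1)
          rw [hall (s + 1) (by omega)] at h1
          exact htrans _ h1 (ih (by omega))
      have hfin : pref (ow z) z (σ^[1] z) := by
        have h := chain (m - 1) (by omega)
        rwa [show m - 1 + 1 = m from by omega, hm2] at h
      have h0 : pref (ow z) (σ^[1] z) z := by
        have := hstep' 0
        simpa using this
      have : z = σ^[1] z := hantisymm _ hfin h0
      apply hzfix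
      simpa using this.symm
    · -- a change of owner exists : build a trading cycle
      push_neg at hall
      have hex : ∃ t, t < m ∧ ow (σ^[t] z) ≠ ow z := by
        obtain ⟨t, ht, hne⟩ := hall
        exact ⟨t, ht, hne⟩
      set t0 := Nat.find hex with ht0def
      have ht0m : t0 < m := (Nat.find_spec hex).1
      have ht0ne : ow (σ^[t0] z) ≠ ow z := (Nat.find_spec hex).2
      have ht0pos : 0 < t0 := by
        rcases Nat.eq_zero_or_pos t0 with h | h
        · exfalso
          apply ht0ne
          rw [h]
          simp
        · exact h
      set s := t0 - 1 with hsdef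
      have hsm : s + 1 = t0 := by omega
      have hss : ow (σ^[s] z) = ow z := by
        by_contra hc
        exact Nat.find_min hex (show s < t0 by omega) ⟨by omega, hc⟩
      have hchange : ow (σ^[s] z) ≠ ow (σ^[s + 1] z) := by
        rw [hsm, hss]
        exact fun h => ht0ne h.symm
      -- instantiate the cycle lemma with the rotated orbit
      apply hacq (ow (σ^[0 + (s + 1)] z), σ^[0 + (s + 1)] z)
      refine cycle_of_trade (AA := A) (m := m)
        (w := fun u => σ^[u + (s + 1)] z) (j := fun u => ow (σ^[u + (s + 1)] z))
        hrefl htrans (by omega) ?_ ?_ ?_ ?_ ?_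
      · intro u _
        exact hyA (u + (s + 1))
      · intro u _
        have h := hstep' (u + (s + 1))
        rwa [show u + (s + 1) + 1 = u + 1 + (s + 1) from by omega] at h
      · rw [show m + (s + 1) = (s + 1) + m from by omega, hperiod (s + 1),
          show 0 + (s + 1) = s + 1 from by omega]
      · rw [show m - 1 + (s + 1) = s + m from by omega, hperiod s,
          show 0 + (s + 1) = s + 1 from by omega]
        exact hchange
      · intro a b hab hbm
        exact hiterinj (a + (s + 1)) (b + (s + 1)) (by omega) (by omega)
end
end

section
/- For any priority π on a fixed finite agent set, the draft rule φ^π satisfies EF1: for every problem (≿, X) and any agents i, j, there exists a set S ⊆ φ^π_i(≿, X) with |S| ≤ 1 such that φ^π_j(≿, X) ≿_j^PD φ^π_i(≿, X) \ S. -/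
open Finset

noncomputable section

lemma exists_top (r : Obj → Obj → Prop) (hr : IsLinearOrder Obj r)
    {S : Finset Obj} (hS : S.Nonempty) : ∃ m ∈ S, ∀ x ∈ S, r m x := by
  classical
  haveI := hr
  revert hS
  induction S using Finset.induction_on with
  | empty => intro h; simp at h
  | @insert a S _ ih =>
    intro _
    rcases S.eq_empty_or_nonempty with rfl | hS'
    · exact ⟨a, by simp, by simp [refl_of r]⟩
    · obtain ⟨m, hm, hmax⟩ := ih hS'
      rcases total_of r a m with h | h
      · refine ⟨a, mem_insert_self _ _, fun x hx => ?_⟩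
        rcases mem_insert.1 hx with rfl | hx
        · exact refl_of r _
        · exact _root_.trans h (hmax x hx)
      · refine ⟨m, mem_insert_of_mem hm, fun x hx => ?_⟩
        rcases mem_insert.1 hx with rfl | hx
        · exact h
        · exact hmax x hx

lemma topOf_spec (r : Obj → Obj → Prop) (hr : IsLinearOrder Obj r)
    {S : Finset Obj} (hS : S.Nonempty) :
    topOf r S ∈ S ∧ ∀ x ∈ S, r (topOf r S) x := by
  have h : ∃ m ∈ S, ∀ x ∈ S, r m x := exists_top r hr hS
  rw [topOf, dif_pos h]
  exact ⟨h.choose_spec.1, h.choose_spec.2⟩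

section
variable {n : ℕ} (pref : Fin n → Obj → Obj → Prop) (f : ℕ → Fin n) (X : Finset Obj)

def pick (k : ℕ) : Obj := topOf (pref (f k)) (remaining pref f X k)

lemma remaining_succ (k : ℕ) :
    remaining pref f X (k+1) = (remaining pref f X k).erase (pick pref f X k) := rfl

lemma remaining_mono {k l : ℕ} (h : k ≤ l) :
    remaining pref f X l ⊆ remaining pref f X k := by
  induction l with
  | zero => simp_all
  | succ l ih =>
    rcases Nat.lt_or_ge k (l+1) with h' | h'
    · exact (remaining_succ pref f X l ▸ erase_subset _ _).trans (ih (Nat.lt_succ_iff.1 h'))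
    · have : k = l + 1 := le_antisymm h h'
      subst this; exact subset_rfl

variable (hpref : LinProfile pref)
include hpref

lemma remaining_card (k : ℕ) :
    (remaining pref f X k).card = X.card - k := by
  induction k with
  | zero => rfl
  | succ k ih =>
    rw [remaining_succ]
    rcases (remaining pref f X k).eq_empty_or_nonempty with he | hne
    · rw [he] at ih ⊢; simp at ih ⊢; omega
    · have hmem : pick pref f X k ∈ remaining pref f X k :=
        (topOf_spec _ (hpref (f k)) hne).1
      rw [card_erase_of_mem hmem, ih]; omega

lemma remaining_nonempty {k : ℕ} (hk : k < X.card) :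
    (remaining pref f X k).Nonempty := by
  rw [← card_pos, remaining_card pref f X hpref]; omega

lemma pick_mem {k : ℕ} (hk : k < X.card) :
    pick pref f X k ∈ remaining pref f X k :=
  (topOf_spec _ (hpref (f k)) (remaining_nonempty pref f X hpref hk)).1

lemma pick_top {k l : ℕ} (hkl : k ≤ l) (hl : l < X.card) :
    pref (f k) (pick pref f X k) (pick pref f X l) := by
  have h1 := pick_mem pref f X hpref hl
  have h2 : pick pref f X l ∈ remaining pref f X k := remaining_mono pref f X hkl h1
  exact (topOf_spec _ (hpref (f k)) (remaining_nonempty pref f X hpref (lt_of_le_of_lt hkl hl))).2 _ h2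

lemma pick_inj {k l : ℕ} (hk : k < X.card) (hl : l < X.card)
    (h : pick pref f X k = pick pref f X l) : k = l := by
  by_contra hne
  wlog hlt : k < l generalizing k l
  · exact this hl hk h.symm (Ne.symm hne) (by omega)
  have h1 : pick pref f X l ∈ remaining pref f X (k+1) :=
    remaining_mono pref f X hlt (pick_mem pref f X hpref hl)
  rw [remaining_succ] at h1
  exact (ne_of_mem_erase h1) h.symm

omit hpref in
lemma mem_draft {i : Fin n} {x : Obj} :
    x ∈ draft pref f X i ↔ ∃ k, k < X.card ∧ f k = i ∧ pick pref f X k = x := by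
  simp only [draft, mem_image, mem_filter, mem_range, pick, and_assoc]

lemma pd_of_steps (i j : Fin n) (g : ℕ → ℕ) (T : Finset Obj)
    (hT : T ⊆ draft pref f X i)
    (hg1 : ∀ k, k < X.card → f k = i → pick pref f X k ∈ T → g k ≤ k ∧ f (g k) = j)
    (hg2 : ∀ k l, k < X.card → l < X.card → f k = i → f l = i →
      pick pref f X k ∈ T → pick pref f X l ∈ T → g k = g l → k = l) :
    PD (pref j) (draft pref f X j) T := by
  classical
  have hstep : ∀ x : {x // x ∈ T}, ∃ k, k < X.card ∧ f k = i ∧ pick pref f X k = x.1 :=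
    fun x => (mem_draft pref f X).1 (hT x.2)
  choose K hK1 hK2 hK3 using hstep
  have hKT : ∀ x : {x // x ∈ T}, pick pref f X (K x) ∈ T := by
    intro x; rw [hK3 x]; exact x.2
  have hmem : ∀ x : {x // x ∈ T}, pick pref f X (g (K x)) ∈ draft pref f X j := by
    intro x
    obtain ⟨hle, hfj⟩ := hg1 (K x) (hK1 x) (hK2 x) (hKT x)
    exact (mem_draft pref f X).2 ⟨g (K x), lt_of_le_of_lt hle (hK1 x), hfj, rfl⟩
  refine ⟨fun x => ⟨pick pref f X (g (K x)), hmem x⟩, ?_, ?_⟩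
  · intro x y hxy
    have h1 : pick pref f X (g (K x)) = pick pref f X (g (K y)) :=
      congrArg Subtype.val hxy
    have hx := hg1 (K x) (hK1 x) (hK2 x) (hKT x)
    have hy := hg1 (K y) (hK1 y) (hK2 y) (hKT y)
    have h2 : g (K x) = g (K y) :=
      pick_inj pref f X hpref (lt_of_le_of_lt hx.1 (hK1 x)) (lt_of_le_of_lt hy.1 (hK1 y)) h1
    have h3 : K x = K y :=
      hg2 (K x) (K y) (hK1 x) (hK1 y) (hK2 x) (hK2 y) (hKT x) (hKT y) h2
    apply Subtype.ext
    rw [← hK3 x, ← hK3 y, h3]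
  · intro x
    obtain ⟨hle, hfj⟩ := hg1 (K x) (hK1 x) (hK2 x) (hKT x)
    have h := pick_top pref f X hpref hle (hK1 x)
    rw [hfj] at h
    show pref j (pick pref f X (g (K x))) x.1
    rw [← hK3 x]
    exact h

end

theorem draft_EF1 {n : ℕ} (hn : 0 < n) (π : Equiv.Perm (Fin n))
    (pref : Fin n → Obj → Obj → Prop) (hpref : LinProfile pref)
    (X : Finset Obj) (hX : X.Nonempty) (i j : Fin n) :
    ∃ S ⊆ draftPi hn pref π X i, S.card ≤ 1 ∧
      PD (pref j) (draftPi hn pref π X j) (draftPi hn pref π X i \ S) := by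
  classical
  set f : ℕ → Fin n := roundRobin hn π with hfdef
  have hdi : draftPi hn pref π X i = draft pref f X i := rfl
  have hdj : draftPi hn pref π X j = draft pref f X j := rfl
  have hfk : ∀ (k : ℕ) (a : Fin n), f k = a ↔ k % n = (π a : ℕ) := by
    intro k a
    rw [hfdef]
    unfold roundRobin
    rw [Equiv.symm_apply_eq, Fin.ext_iff]
  have hpi : (π i : ℕ) < n := (π i).2
  have hpj : (π j : ℕ) < n := (π j).2
  rcases le_or_gt (π j : ℕ) (π i : ℕ) with hle | hlt
  · -- j picks weakly before i in each round: S = ∅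
    refine ⟨∅, empty_subset _, by simp, ?_⟩
    rw [sdiff_empty, hdi, hdj]
    refine pd_of_steps pref f X hpref i j (fun k => (k / n) * n + (π j : ℕ)) _
      subset_rfl ?_ ?_
    · intro k hk hfki _
      have hki : k % n = (π i : ℕ) := (hfk k i).1 hfki
      have e := Nat.div_add_mod k n
      have e2 : (k / n) * n = n * (k / n) := Nat.mul_comm _ _
      refine ⟨by omega, (hfk _ j).2 ?_⟩
      rw [Nat.add_comm, Nat.add_mul_mod_self_right]
      exact Nat.mod_eq_of_lt hpj
    · intro k l hk hl hfki hfli _ _ heq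
      have hki : k % n = (π i : ℕ) := (hfk k i).1 hfki
      have hli : l % n = (π i : ℕ) := (hfk l i).1 hfli
      have h1 : (k / n) * n = (l / n) * n := by omega
      have h2 : k / n = l / n := Nat.eq_of_mul_eq_mul_right hn h1
      have e1 := Nat.div_add_mod k n
      have e2 := Nat.div_add_mod l n
      have e3 : n * (k / n) = n * (l / n) := by rw [h2]
      omega
  · -- i picks before j in each round
    by_cases hiN : (π i : ℕ) < X.card
    · refine ⟨{pick pref f X (π i : ℕ)}, ?_, by simp, ?_⟩
      · rw [singleton_subset_iff, hdi, mem_draft]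
        exact ⟨(π i : ℕ), hiN, (hfk _ i).2 (Nat.mod_eq_of_lt hpi), rfl⟩
      · rw [hdi, hdj]
        have key : ∀ k, f k = i →
            pick pref f X k ∈ draft pref f X i \ {pick pref f X (π i : ℕ)} →
            1 ≤ k / n ∧ k % n = (π i : ℕ) := by
          intro k hfki hmemT
          have hki : k % n = (π i : ℕ) := (hfk k i).1 hfki
          have hne : k ≠ (π i : ℕ) := by
            intro h
            exact (mem_sdiff.1 hmemT).2 (by rw [h]; exact mem_singleton_self _)
          have e := Nat.div_add_mod k n
          refine ⟨?_, hki⟩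
          rcases Nat.eq_zero_or_pos (k / n) with h0 | h
          · rw [h0, Nat.mul_zero] at e; omega
          · exact h
        refine pd_of_steps pref f X hpref i j (fun k => (k / n - 1) * n + (π j : ℕ)) _
          sdiff_subset ?_ ?_
        · intro k hk hfki hmemT
          obtain ⟨hq, hki⟩ := key k hfki hmemT
          have e := Nat.div_add_mod k n
          have e2 : (k / n - 1) * n = n * (k / n) - n := by
            rw [Nat.sub_mul, one_mul, Nat.mul_comm]
          have e3 : n ≤ n * (k / n) := Nat.le_mul_of_pos_right n hq
          refine ⟨by omega, (hfk _ j).2 ?_⟩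
          rw [Nat.add_comm, Nat.add_mul_mod_self_right]
          exact Nat.mod_eq_of_lt hpj
        · intro k l hk hl hfki hfli hmk hml heq
          obtain ⟨hqk, hki⟩ := key k hfki hmk
          obtain ⟨hql, hli⟩ := key l hfli hml
          have h1 : (k / n - 1) * n = (l / n - 1) * n := by omega
          have h2 : k / n - 1 = l / n - 1 := Nat.eq_of_mul_eq_mul_right hn h1
          have h3 : k / n = l / n := by omega
          have e1 := Nat.div_add_mod k n
          have e2 := Nat.div_add_mod l n
          have e3 : n * (k / n) = n * (l / n) := by rw [h3]
          omega
    · -- draft i is empty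
      have hempty : draftPi hn pref π X i = ∅ := by
        rw [hdi, eq_empty_iff_forall_notMem]
        intro x hx
        obtain ⟨k, hk, hfki, _⟩ := (mem_draft pref f X).1 hx
        have hki : k % n = (π i : ℕ) := (hfk k i).1 hfki
        have : k % n ≤ k := Nat.mod_le k n
        omega
      refine ⟨∅, empty_subset _, by simp, ?_⟩
      rw [hempty, empty_sdiff]
      exact ⟨fun x => (Finset.notMem_empty x.1 x.2).elim,
        fun a b _ => (Finset.notMem_empty a.1 a.2).elim,
        fun x => (Finset.notMem_empty x.1 x.2).elim⟩
end
end

section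
/- Every draft rule φ^π is resource monotonic: for any preference profile ≿ and finite nonempty sets X' ⊆ X of available objects, φ^π_i(≿, X) ≿_i^PD φ^π_i(≿, X') for every agent i. -/
open Finset

noncomputable section

namespace DraftAux


lemma exists_rmin (r : Obj → Obj → Prop) (total : ∀ a b, r a b ∨ r b a)
    (htr : ∀ ⦃a b c⦄, r a b → r b c → r a c) (hrefl : ∀ a, r a a) :
    ∀ S : Finset Obj, S.Nonempty → ∃ m ∈ S, ∀ x ∈ S, r m x := by
  intro S
  induction S using Finset.induction_on with
  | empty => intro h; simp at h
  | @insert a S ha ih =>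
    intro _
    rcases S.eq_empty_or_nonempty with rfl | hS
    · exact ⟨a, by simp, by simp [hrefl]⟩
    · obtain ⟨m, hm, hmin⟩ := ih hS
      rcases total a m with h | h
      · refine ⟨a, mem_insert_self _ _, ?_⟩
        intro x hx
        rcases mem_insert.1 hx with rfl | hx
        · exact hrefl x
        · exact htr h (hmin x hx)
      · refine ⟨m, mem_insert_of_mem hm, ?_⟩
        intro x hx
        rcases mem_insert.1 hx with rfl | hx
        · exact h
        · exact hmin x hx

variable {n : ℕ} {pref : Fin n → Obj → Obj → Prop} {f : ℕ → Fin n}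

lemma ltotal (hpref : LinProfile pref) (j : Fin n) : ∀ a b, pref j a b ∨ pref j b a := by
  haveI := hpref j
  exact fun a b => total_of (pref j) a b

lemma ltrans (hpref : LinProfile pref) (j : Fin n) :
    ∀ ⦃a b c⦄, pref j a b → pref j b c → pref j a c := by
  haveI := hpref j
  exact fun a b c h1 h2 => _root_.trans h1 h2

lemma lrefl (hpref : LinProfile pref) (j : Fin n) : ∀ a, pref j a a := by
  haveI := hpref j
  exact fun a => refl_of (pref j) a

lemma lantisymm (hpref : LinProfile pref) (j : Fin n) :
    ∀ ⦃a b⦄, pref j a b → pref j b a → a = b := by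
  haveI := hpref j
  exact fun a b h1 h2 => antisymm h1 h2

lemma topOf_spec (hpref : LinProfile pref) (j : Fin n) (S : Finset Obj) (hS : S.Nonempty) :
    topOf (pref j) S ∈ S ∧ ∀ x ∈ S, pref j (topOf (pref j) S) x := by
  have h : ∃ m ∈ S, ∀ x ∈ S, pref j m x :=
    exists_rmin (pref j) (ltotal hpref j) (ltrans hpref j) (lrefl hpref j) S hS
  rw [topOf, dif_pos h]
  exact ⟨h.choose_spec.1, h.choose_spec.2⟩

lemma rem_succ (X : Finset Obj) (k : ℕ) :
    remaining pref f X (k+1)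
      = (remaining pref f X k).erase (topOf (pref (f k)) (remaining pref f X k)) := rfl

lemma rem_subset (X : Finset Obj) : ∀ {j k : ℕ}, j ≤ k →
    remaining pref f X k ⊆ remaining pref f X j := by
  intro j k
  induction k with
  | zero =>
    intro h
    have : j = 0 := Nat.le_zero.1 h
    subst this
    exact Finset.Subset.refl _
  | succ k ih =>
    intro h
    rcases Nat.eq_or_lt_of_le h with rfl | h
    · exact Finset.Subset.refl _
    · exact (erase_subset _ _).trans (ih (Nat.lt_succ_iff.1 h))

lemma rem_card (hpref : LinProfile pref) (X : Finset Obj) :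
    ∀ k, k ≤ X.card → (remaining pref f X k).card = X.card - k := by
  intro k
  induction k with
  | zero => intro _; rfl
  | succ k ih =>
    intro hk
    have hcard := ih (Nat.le_of_succ_le hk)
    have hne : (remaining pref f X k).Nonempty := by
      rw [← card_pos, hcard]; omega
    have htop := topOf_spec hpref (f k) _ hne
    rw [rem_succ, card_erase_of_mem htop.1, hcard]
    omega

lemma rem_nonempty (hpref : LinProfile pref) {X : Finset Obj} {k : ℕ} (hk : k < X.card) :
    (remaining pref f X k).Nonempty := by
  rw [← card_pos, rem_card hpref X k (le_of_lt hk)]; omega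

lemma pick_mem (hpref : LinProfile pref) {X : Finset Obj} {k : ℕ} (hk : k < X.card) :
    topOf (pref (f k)) (remaining pref f X k) ∈ remaining pref f X k :=
  (topOf_spec hpref (f k) _ (rem_nonempty hpref hk)).1

lemma pick_ne (hpref : LinProfile pref) {X : Finset Obj} {k1 k2 : ℕ}
    (h1 : k1 < X.card) (h2 : k2 < X.card) (hne : k1 ≠ k2) :
    topOf (pref (f k1)) (remaining pref f X k1) ≠ topOf (pref (f k2)) (remaining pref f X k2) := by
  have key : ∀ {a b : ℕ}, a < b → b < X.card →
      topOf (pref (f b)) (remaining pref f X b) ≠ topOf (pref (f a)) (remaining pref f X a) := by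
    intro a b hab hb
    have hmem : topOf (pref (f b)) (remaining pref f X b) ∈ remaining pref f X (a+1) :=
      rem_subset X hab (pick_mem hpref hb)
    rw [rem_succ] at hmem
    exact ne_of_mem_erase hmem
  rcases lt_or_gt_of_ne hne with h | h
  · exact (key h h2).symm
  · exact key h h1

lemma rem_dich (hpref : LinProfile pref) {x : Obj} {X' : Finset Obj} (hx : x ∉ X') :
    ∀ k, remaining pref f (insert x X') k = remaining pref f X' k ∨
      ∃ y, y ∉ remaining pref f X' k ∧
        remaining pref f (insert x X') k = insert y (remaining pref f X' k) := by
  intro k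
  induction k with
  | zero => exact Or.inr ⟨x, hx, rfl⟩
  | succ k ih =>
    rcases ih with heq | ⟨y, hy, heq⟩
    · left
      rw [rem_succ, rem_succ, heq]
    · set R' := remaining pref f X' k with hR'def
      have hXk : remaining pref f (insert x X') (k+1) = (insert y R').erase
          (topOf (pref (f k)) (insert y R')) := by rw [rem_succ, heq]
      have htop := topOf_spec hpref (f k) (insert y R') ⟨y, mem_insert_self _ _⟩
      set t := topOf (pref (f k)) (insert y R') with htdef
      by_cases hty : t = y
      · have hXk' : remaining pref f (insert x X') (k+1) = R' := by
          rw [hXk, hty, erase_insert hy]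
        rcases R'.eq_empty_or_nonempty with hRe | hRne
        · left
          rw [hXk', rem_succ, ← hR'def, hRe, erase_empty]
        · right
          have htop' := topOf_spec hpref (f k) R' hRne
          refine ⟨topOf (pref (f k)) R', notMem_erase _ _, ?_⟩
          rw [hXk', rem_succ, ← hR'def, insert_erase htop'.1]
      · have htR' : t ∈ R' := by
          rcases mem_insert.1 htop.1 with h | h
          · exact absurd h hty
          · exact h
        have hRne : R'.Nonempty := ⟨t, htR'⟩
        have htop' := topOf_spec hpref (f k) R' hRne
        have hteq : t = topOf (pref (f k)) R' :=
          lantisymm hpref (f k) (htop.2 _ (mem_insert_of_mem htop'.1)) (htop'.2 _ htR')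
        right
        refine ⟨y, fun h => hy (mem_of_mem_erase h), ?_⟩
        rw [hXk, rem_succ, ← hR'def, ← hteq,
          erase_insert_of_ne (fun h => hty h.symm)]

lemma rem_subset_dich (hpref : LinProfile pref) {x : Obj} {X' : Finset Obj} (hx : x ∉ X')
    (k : ℕ) : remaining pref f X' k ⊆ remaining pref f (insert x X') k := by
  rcases rem_dich hpref hx k with heq | ⟨y, _, heq⟩
  · rw [heq]
  · rw [heq]; exact subset_insert _ _

lemma pick_pref (hpref : LinProfile pref) {x : Obj} {X' : Finset Obj} (hx : x ∉ X')
    {k : ℕ} (hk : k < X'.card) :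
    pref (f k) (topOf (pref (f k)) (remaining pref f (insert x X') k))
      (topOf (pref (f k)) (remaining pref f X' k)) := by
  have hmem : topOf (pref (f k)) (remaining pref f X' k) ∈ remaining pref f (insert x X') k :=
    rem_subset_dich hpref hx k (pick_mem hpref hk)
  exact (topOf_spec hpref (f k) _ ⟨_, hmem⟩).2 _ hmem


variable {n : ℕ} {pref : Fin n → Obj → Obj → Prop} {f : ℕ → Fin n}

lemma PD_refl (r : Obj → Obj → Prop) (hrefl : ∀ a, r a a) (S : Finset Obj) : PD r S S :=
  ⟨id, Function.injective_id, fun x => hrefl x.1⟩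

lemma PD_trans (r : Obj → Obj → Prop) (htr : ∀ ⦃a b c⦄, r a b → r b c → r a c)
    {S T U : Finset Obj} (h1 : PD r S T) (h2 : PD r T U) : PD r S U := by
  obtain ⟨μ1, h1i, h1r⟩ := h1
  obtain ⟨μ2, h2i, h2r⟩ := h2
  exact ⟨μ1 ∘ μ2, h1i.comp h2i, fun x => htr (h1r (μ2 x)) (h2r x)⟩

lemma step_PD (hpref : LinProfile pref) {x : Obj} {X' : Finset Obj} (hx : x ∉ X') (i : Fin n) :
    PD (pref i) (draft pref f (insert x X') i) (draft pref f X' i) := by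
  classical
  have hXc : (insert x X').card = X'.card + 1 := card_insert_of_notMem hx
  have hT : ∀ a : {a // a ∈ draft pref f X' i}, ∃ k, (k < X'.card ∧ f k = i) ∧
      topOf (pref (f k)) (remaining pref f X' k) = a.1 := by
    rintro ⟨a, ha⟩
    rw [draft, mem_image] at ha
    obtain ⟨k, hk, hka⟩ := ha
    rw [mem_filter, mem_range] at hk
    exact ⟨k, hk, hka⟩
  choose g hg1 hg2 using hT
  have hmemS : ∀ a, topOf (pref (f (g a))) (remaining pref f (insert x X') (g a))
      ∈ draft pref f (insert x X') i := by
    intro a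
    rw [draft, mem_image]
    have hlt := (hg1 a).1
    exact ⟨g a, mem_filter.2 ⟨mem_range.2 (by omega), (hg1 a).2⟩, rfl⟩
  refine ⟨fun a => ⟨_, hmemS a⟩, ?_, ?_⟩
  · intro a b hab
    have hab' : topOf (pref (f (g a))) (remaining pref f (insert x X') (g a))
        = topOf (pref (f (g b))) (remaining pref f (insert x X') (g b)) :=
      congrArg Subtype.val hab
    have hlta := (hg1 a).1
    have hltb := (hg1 b).1
    have hgeq : g a = g b := by
      by_contra hne
      exact pick_ne hpref (by omega : g a < (insert x X').card)
        (by omega : g b < (insert x X').card) hne hab'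
    apply Subtype.ext
    rw [← hg2 a, ← hg2 b, hgeq]
  · intro a
    have h := pick_pref (f := f) hpref hx (hg1 a).1
    rw [hg2 a] at h
    show pref i (topOf (pref (f (g a))) (remaining pref f (insert x X') (g a))) a.1
    rw [(hg1 a).2] at h ⊢
    exact h

end DraftAux

theorem draft_resource_monotonic {n : ℕ} (hn : 0 < n) (π : Equiv.Perm (Fin n))
    (pref : Fin n → Obj → Obj → Prop) (hpref : LinProfile pref)
    (X X' : Finset Obj) (hX' : X'.Nonempty) (hsub : X' ⊆ X) (i : Fin n) :
    PD (pref i) (draftPi hn pref π X i) (draftPi hn pref π X' i) := by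
  classical
  have key : ∀ m (X : Finset Obj), X' ⊆ X → (X \ X').card = m →
      PD (pref i) (draftPi hn pref π X i) (draftPi hn pref π X' i) := by
    intro m
    induction m with
    | zero =>
      intro X hsub h0
      have hXX : X = X' := by
        have h1 : X ⊆ X' := sdiff_eq_empty_iff_subset.1 (card_eq_zero.1 h0)
        exact subset_antisymm h1 hsub
      subst hXX
      exact DraftAux.PD_refl _ (DraftAux.lrefl hpref i) _
    | succ m ih =>
      intro X hsubX hc
      have hne : (X \ X').Nonempty := card_pos.1 (by omega)
      obtain ⟨x, hxmem⟩ := hne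
      have hxX : x ∈ X := (mem_sdiff.1 hxmem).1
      have hxX' : x ∉ X' := (mem_sdiff.1 hxmem).2
      obtain ⟨Y, hxY, rfl⟩ : ∃ Y, x ∉ Y ∧ X = insert x Y :=
        ⟨X.erase x, notMem_erase _ _, (insert_erase hxX).symm⟩
      have h1 : X' ⊆ Y := fun a ha => by
        rcases mem_insert.1 (hsubX ha) with rfl | h
        · exact absurd ha hxX'
        · exact h
      have hcard : (Y \ X').card = m := by
        have heq : Y \ X' = (insert x Y \ X').erase x := by
          ext a
          simp only [mem_sdiff, mem_erase, mem_insert]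
          constructor
          · intro ⟨h1, h2⟩
            exact ⟨fun h => hxY (h ▸ h1), Or.inr h1, h2⟩
          · rintro ⟨h1, h2 | h2, h3⟩
            · exact absurd h2 h1
            · exact ⟨h2, h3⟩
        rw [heq, card_erase_of_mem hxmem, hc]
        omega
      have hstep : PD (pref i) (draftPi hn pref π (insert x Y) i)
          (draftPi hn pref π Y i) :=
        DraftAux.step_PD hpref hxY i
      exact DraftAux.PD_trans _ (DraftAux.ltrans hpref i) hstep (ih Y h1 hcard)
  exact key _ X hsub rfl
end
end

section
/- Let φ be a resource-monotonic allocation rule that agrees with some draft rule φ^f at a problem (≿, X), and let x ∉ X be an object such that y ≻_i x for every agent i and every y ∈ φ_i(≿, X). Then φ_i(≿, X) ⊆ φ_i(≿, X ∪ {x}) for every agent i. -/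
open Finset

noncomputable section

-- Auxiliary lemmas ------------------------------------------------------

theorem exists_top_s12 (r : Obj → Obj → Prop) (h : IsLinearOrder Obj r)
    {X : Finset Obj} (hX : X.Nonempty) : ∃ m ∈ X, ∀ y ∈ X, r m y := by
  classical
  haveI := h
  induction X using Finset.induction_on with
  | empty => simp at hX
  | @insert b s hb ih =>
    rcases s.eq_empty_or_nonempty with hs | hs
    · subst hs
      exact ⟨b, by simp, by simp [refl_of r b]⟩
    · obtain ⟨m, hm, hmax⟩ := ih hs
      rcases total_of r m b with h1 | h1
      · exact ⟨m, Finset.mem_insert_of_mem hm, by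
          intro y hy
          rcases Finset.mem_insert.mp hy with rfl | hy
          · exact h1
          · exact hmax y hy⟩
      · exact ⟨b, Finset.mem_insert_self _ _, by
          intro y hy
          rcases Finset.mem_insert.mp hy with rfl | hy
          · exact refl_of r y
          · exact trans_of r h1 (hmax y hy)⟩

theorem topOf_spec_s12 (r : Obj → Obj → Prop) (h : IsLinearOrder Obj r)
    {X : Finset Obj} (hX : X.Nonempty) :
    topOf r X ∈ X ∧ ∀ y ∈ X, r (topOf r X) y := by
  have hex := exists_top_s12 r h hX
  rw [topOf, dif_pos hex]
  exact ⟨hex.choose_spec.1, hex.choose_spec.2⟩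

theorem rem_succ {n : ℕ} (pref : Fin n → Obj → Obj → Prop) (f : ℕ → Fin n)
    (X : Finset Obj) (k : ℕ) :
    remaining pref f X (k + 1)
      = (remaining pref f X k).erase (topOf (pref (f k)) (remaining pref f X k)) := rfl

theorem rem_subset {n : ℕ} (pref : Fin n → Obj → Obj → Prop) (f : ℕ → Fin n)
    (X : Finset Obj) : ∀ k, remaining pref f X k ⊆ X := by
  intro k
  induction k with
  | zero => exact fun z hz => hz
  | succ k ih => exact fun z hz => ih (Finset.erase_subset _ _ hz)

theorem rem_mono {n : ℕ} (pref : Fin n → Obj → Obj → Prop) (f : ℕ → Fin n)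
    (X : Finset Obj) {j k : ℕ} (hjk : j ≤ k) :
    remaining pref f X k ⊆ remaining pref f X j := by
  induction k with
  | zero => simp_all
  | succ k ih =>
    rcases Nat.lt_or_ge j (k+1) with h | h
    · exact fun z hz =>
        ih (Nat.lt_succ_iff.mp h) (Finset.erase_subset _ _ hz)
    · have : j = k + 1 := le_antisymm hjk h
      subst this
      exact fun z hz => hz

theorem rem_card {n : ℕ} {pref : Fin n → Obj → Obj → Prop} (hpref : LinProfile pref)
    (f : ℕ → Fin n) (X : Finset Obj) :
    ∀ k, k ≤ X.card → (remaining pref f X k).card = X.card - k := by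
  intro k
  induction k with
  | zero => simp [remaining]
  | succ k ih =>
    intro hk
    have hk' : k ≤ X.card := Nat.le_of_succ_le hk
    have hcard := ih hk'
    have hne : (remaining pref f X k).Nonempty := by
      rw [← Finset.card_pos, hcard]
      omega
    have hmem := (topOf_spec_s12 (pref (f k)) (hpref (f k)) hne).1
    rw [rem_succ, Finset.card_erase_of_mem hmem, hcard]
    omega

theorem rem_nonempty {n : ℕ} {pref : Fin n → Obj → Obj → Prop} (hpref : LinProfile pref)
    (f : ℕ → Fin n) (X : Finset Obj) {k : ℕ} (hk : k < X.card) :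
    (remaining pref f X k).Nonempty := by
  rw [← Finset.card_pos, rem_card hpref f X k (le_of_lt hk)]
  omega

theorem rem_diff {n : ℕ} (pref : Fin n → Obj → Obj → Prop) (f : ℕ → Fin n)
    (X : Finset Obj) :
    ∀ k, ∀ y ∈ X, y ∉ remaining pref f X k →
      ∃ j < k, y = topOf (pref (f j)) (remaining pref f X j) := by
  intro k
  induction k with
  | zero => exact fun y hy hny => absurd hy hny
  | succ k ih =>
    intro y hy hny
    by_cases hmem : y ∈ remaining pref f X k
    · refine ⟨k, Nat.lt_succ_self k, ?_⟩
      by_contra hne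
      exact hny (Finset.mem_erase.mpr ⟨hne, hmem⟩)
    · obtain ⟨j, hj, hje⟩ := ih y hy hmem
      exact ⟨j, Nat.lt_succ_of_lt hj, hje⟩

theorem rm_lemma {n : ℕ}
    (φ : (Fin n → Obj → Obj → Prop) → Finset Obj → Fin n → Finset Obj)
    (hvalid : ∀ pref, LinProfile pref → ∀ X : Finset Obj, X.Nonempty →
      IsAlloc (φ pref X) X)
    (hRM : ∀ pref, LinProfile pref → ∀ X X' : Finset Obj, X'.Nonempty → X' ⊆ X →
      ∀ i, PD (pref i) (φ pref X i) (φ pref X' i))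
    (pref : Fin n → Obj → Obj → Prop) (hpref : LinProfile pref)
    (X : Finset Obj) (hX : X.Nonempty)
    (f : ℕ → Fin n) (hagree : φ pref X = draft pref f X)
    (x : Obj) (hx : x ∉ X)
    (hworse : ∀ i, ∀ y ∈ φ pref X i, pref i y x ∧ y ≠ x) :
    ∀ i, φ pref X i ⊆ φ pref (insert x X) i := by
  classical
  set B : Fin n → Finset Obj := φ pref (insert x X) with hB
  set a : ℕ → Obj := fun k => topOf (pref (f k)) (remaining pref f X k) with ha
  have hins : (insert x X).Nonempty := insert_nonempty _ _
  have hBalloc := hvalid pref hpref (insert x X) hins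
  have hPD : ∀ i, PD (pref i) (B i) (φ pref X i) :=
    fun i => hRM pref hpref (insert x X) X hX (subset_insert x X) i
  -- each object in the draft allocation at X is better than `a k` iff picked earlier;
  -- key induction: the k-th picked object stays with agent f k at the larger set
  have key : ∀ k, k < X.card → a k ∈ B (f k) := by
    intro k
    induction k using Nat.strong_induction_on with
    | _ k IH =>
    intro hk
    haveI := hpref (f k)
    set i := f k with hi
    have hrne : (remaining pref f X k).Nonempty := rem_nonempty hpref f X hk
    have htop := topOf_spec_s12 (pref i) (hpref i) hrne
    have hak_mem : a k ∈ remaining pref f X k := htop.1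
    have hak_top : ∀ y ∈ remaining pref f X k, pref i (a k) y := htop.2
    have hakA : a k ∈ φ pref X i := by
      rw [hagree, draft]
      exact mem_image.mpr ⟨k, mem_filter.mpr ⟨mem_range.mpr hk, rfl⟩, rfl⟩
    -- earlier picks of agent i
    set E : Finset Obj := ((range k).filter (fun j => f j = i)).image a with hE
    have haj_ne : ∀ j < k, a j ≠ a k := by
      intro j hj hne
      have h1 : a j ∉ remaining pref f X (j + 1) := by
        rw [rem_succ]
        exact Finset.notMem_erase _ _
      exact h1 (rem_mono pref f X (Nat.succ_le_of_lt hj) (hne ▸ hak_mem))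
    have hakE : a k ∉ E := by
      intro hmem
      obtain ⟨j, hj, hje⟩ := mem_image.mp hmem
      exact haj_ne j (mem_range.mp (mem_filter.mp hj).1) hje
    set Sa : Finset Obj := (φ pref X i).filter (fun z => pref i z (a k)) with hSa
    set Sb : Finset Obj := (B i).filter (fun z => pref i z (a k)) with hSb
    -- |Sa| ≤ |Sb| via the PD injection
    obtain ⟨ν, νinj, νdom⟩ := hPD i
    have hcard1 : Sa.card ≤ Sb.card := by
      apply Finset.card_le_card_of_injOn
        (fun z => if h : z ∈ φ pref X i then (ν ⟨z, h⟩).1 else z)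
      · intro z hz
        obtain ⟨hzA, hzpref⟩ := mem_filter.mp hz
        show (if h : z ∈ φ pref X i then (ν ⟨z, h⟩).1 else z) ∈ Sb
        rw [dif_pos hzA]
        refine mem_filter.mpr ⟨(ν ⟨z, hzA⟩).2, ?_⟩
        exact trans_of (pref i) (νdom ⟨z, hzA⟩) hzpref
      · intro z hz w hw hzw
        obtain ⟨hzA, _⟩ := mem_filter.mp hz
        obtain ⟨hwA, _⟩ := mem_filter.mp hw
        simp only [dif_pos hzA, dif_pos hwA] at hzw
        have := νinj (Subtype.ext hzw)
        exact congrArg Subtype.val this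
    -- insert (a k) E ⊆ Sa
    have hEsub : insert (a k) E ⊆ Sa := by
      intro z hz
      rcases Finset.mem_insert.mp hz with rfl | hzE
      · exact mem_filter.mpr ⟨hakA, refl_of (pref i) _⟩
      · obtain ⟨j, hj, rfl⟩ := mem_image.mp hzE
        obtain ⟨hjr, hji⟩ := mem_filter.mp hj
        have hjk : j < k := mem_range.mp hjr
        have hjX : j < X.card := lt_trans hjk hk
        have hjne : (remaining pref f X j).Nonempty := rem_nonempty hpref f X hjX
        have hjtop := topOf_spec_s12 (pref (f j)) (hpref (f j)) hjne
        refine mem_filter.mpr ⟨?_, ?_⟩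
        · rw [hagree, draft]
          exact mem_image.mpr ⟨j, mem_filter.mpr ⟨mem_range.mpr hjX, hji⟩, rfl⟩
        · have hakj : a k ∈ remaining pref f X j :=
            rem_mono pref f X (le_of_lt hjk) hak_mem
          show pref i (a j) (a k)
          simp only [ha]
          rw [← hji]
          exact hjtop.2 (a k) hakj
    have hcard2 : E.card + 1 ≤ Sa.card := by
      have := Finset.card_le_card hEsub
      rwa [Finset.card_insert_of_notMem hakE] at this
    -- main: a k ∈ B i
    by_contra hnB
    have hSbE : Sb ⊆ E := by
      intro z hz
      obtain ⟨hzB, hzpref⟩ := mem_filter.mp hz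
      have hzk : z ≠ a k := fun h => hnB (h ▸ hzB)
      have hzx : z ≠ x := by
        intro h
        obtain ⟨hwp, hwn⟩ := hworse i (a k) hakA
        exact hwn (antisymm hwp (h ▸ hzpref))
      have hzX : z ∈ X := by
        rcases Finset.mem_insert.mp (hBalloc.1 i hzB) with h | h
        · exact absurd h hzx
        · exact h
      have hzrem : z ∉ remaining pref f X k := by
        intro h
        exact hzk (antisymm hzpref (hak_top z h))
      obtain ⟨j, hjk, rfl⟩ := rem_diff pref f X k z hzX hzrem
      have hjB : a j ∈ B (f j) := IH j hjk (lt_trans hjk hk)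
      have hfj : f j = i := by
        by_contra hne
        exact (Finset.disjoint_left.mp (hBalloc.2 (f j) i hne) hjB) hzB
      exact mem_image.mpr ⟨j, mem_filter.mpr ⟨mem_range.mpr hjk, hfj⟩, rfl⟩
    have : Sb.card ≤ E.card := Finset.card_le_card hSbE
    omega
  -- conclude
  intro i y hy
  rw [hagree, draft] at hy
  obtain ⟨k, hk, rfl⟩ := mem_image.mp hy
  obtain ⟨hkr, hki⟩ := mem_filter.mp hk
  have := key k (mem_range.mp hkr)
  rw [hki] at this
  exact this
end
end
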